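/- The Rényi divergence of order λ > 1 between two Gaussian distributions N(μ₁, σ²) and N(μ₂, σ²) with equal variance equals λ(μ₁ − μ₂)²/(2σ²). -/

import Mathlib

/-- Density of the Gaussian distribution `N(μ, σ²)` on `ℝ`. -/
noncomputable def gaussDensity (μ σ : ℝ) (x : ℝ) : ℝ :=
  (1 / (σ * Real.sqrt (2 * Real.pi))) * Real.exp (-(x - μ) ^ 2 / (2 * σ ^ 2))

/-- Rényi divergence of order `l` between two densities `p, q` on `ℝ`:
`D_l(p‖q) = (1/(l-1)) * log ∫ x : ℝ, p(x)^l * q(x)^(1-l) dx`. -/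
noncomputable def renyiDivDensity (l : ℝ) (p q : ℝ → ℝ) : ℝ :=
  (l - 1)⁻¹ * Real.log (∫ x : ℝ, p x ^ l * q x ^ (1 - l))

lemma integral_gaussDensity (μ σ : ℝ) (hσ : 0 < σ) :
    ∫ x : ℝ, gaussDensity μ σ x = 1 := by
  unfold gaussDensity
  rw [MeasureTheory.integral_const_mul]
  have h : ∀ x : ℝ, Real.exp (-(x - μ) ^ 2 / (2 * σ ^ 2))
      = Real.exp (-(1 / (2 * σ ^ 2)) * (x - μ) ^ 2) := by
    intro x; ring_nf
  simp_rw [h]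
  rw [MeasureTheory.integral_sub_right_eq_self (fun x => Real.exp (-(1 / (2 * σ ^ 2)) * x ^ 2)) μ]
  rw [integral_gaussian]
  have h2 : Real.pi / (1 / (2 * σ ^ 2)) = (2 * Real.pi) * σ ^ 2 := by
    field_simp
  rw [h2, show (2 : ℝ) * Real.pi * σ ^ 2 = (2 * Real.pi) * σ ^ 2 by ring,
      Real.sqrt_mul (by positivity : (0:ℝ) ≤ 2 * Real.pi), Real.sqrt_sq hσ.le]
  have hs : Real.sqrt (2 * Real.pi) > 0 := Real.sqrt_pos.2 (by positivity)
  field_simp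

/-- **Rényi divergence between Gaussians with equal variance.** For `l > 1`
and `σ > 0`, `D_l(N(μ₁, σ²) ‖ N(μ₂, σ²)) = l * (μ₁ - μ₂)² / (2σ²)`. -/
theorem renyiDiv_gaussian (l μ₁ μ₂ σ : ℝ) (hl : 1 < l) (hσ : 0 < σ) :
    renyiDivDensity l (gaussDensity μ₁ σ) (gaussDensity μ₂ σ) =
      l * (μ₁ - μ₂) ^ 2 / (2 * σ ^ 2) := by
  set A : ℝ := 1 / (σ * Real.sqrt (2 * Real.pi)) with hA
  have hApos : 0 < A := by positivity
  set m : ℝ := l * μ₁ + (1 - l) * μ₂ with hm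
  set c : ℝ := Real.exp (l * (l - 1) * (μ₁ - μ₂) ^ 2 / (2 * σ ^ 2)) with hc
  have key : ∀ x : ℝ, gaussDensity μ₁ σ x ^ l * gaussDensity μ₂ σ x ^ (1 - l)
      = c * gaussDensity m σ x := by
    intro x
    unfold gaussDensity
    rw [Real.mul_rpow hApos.le (Real.exp_pos _).le,
        Real.mul_rpow hApos.le (Real.exp_pos _).le,
        ← Real.exp_mul, ← Real.exp_mul]
    have hAc : A ^ l * A ^ (1 - l) = A := by
      rw [← Real.rpow_add hApos]; simp
    rw [show (A ^ l * Real.exp (-(x - μ₁) ^ 2 / (2 * σ ^ 2) * l)) *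
        (A ^ (1 - l) * Real.exp (-(x - μ₂) ^ 2 / (2 * σ ^ 2) * (1 - l)))
        = (A ^ l * A ^ (1 - l)) * (Real.exp (-(x - μ₁) ^ 2 / (2 * σ ^ 2) * l) *
          Real.exp (-(x - μ₂) ^ 2 / (2 * σ ^ 2) * (1 - l))) by ring, hAc,
        ← Real.exp_add, hc, hm]
    rw [show c * (A * Real.exp (-(x - m) ^ 2 / (2 * σ ^ 2)))
        = A * (c * Real.exp (-(x - m) ^ 2 / (2 * σ ^ 2))) by ring, hc, ← Real.exp_add]
    congr 1
    have hσ2 : (2 : ℝ) * σ ^ 2 ≠ 0 := by positivity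
    rw [hm]
    field_simp
    ring
  unfold renyiDivDensity
  simp_rw [key]
  rw [MeasureTheory.integral_const_mul, integral_gaussDensity m σ hσ, mul_one, hc,
      Real.log_exp]
  have hne : l - 1 ≠ 0 := sub_ne_zero.2 (ne_of_gt hl)
  have hσ2 : (2 : ℝ) * σ ^ 2 ≠ 0 := by positivity
  field_simp
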